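/- Let d ≥ 1 be an integer and 1 ≤ r < ∞. Let R_t(x) = Σ_{n ∈ ℤ^d} P_t(x + n) be the periodization of the Poisson kernel. There exists a constant C > 0 such that for all t ∈ (0, 1], ( ∫_{[0,1]^d} R_t(x)^r dx )^{1/r} ≤ C t^{-d(1 - 1/r)}. -/

import Mathlib

open MeasureTheory Real ENNReal

/-- The Poisson kernel on `ℝ^d`. -/
noncomputable def poissonKernelEuclidean (d : ℕ) (t : ℝ) (x : EuclideanSpace ℝ (Fin d)) : ℝ :=
  Real.Gamma (((d : ℝ) + 1) / 2) * Real.pi ^ (-(((d : ℝ) + 1) / 2)) * t *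
    (t ^ 2 + ‖x‖ ^ 2) ^ (-(((d : ℝ) + 1) / 2))

/-- The `ℤ^d`-periodization `R_t(x) = Σ_{n ∈ ℤ^d} P_t(x + n)` of the Poisson kernel. -/
noncomputable def periodicPoissonKernel (d : ℕ) (t : ℝ) (x : EuclideanSpace ℝ (Fin d)) : ℝ :=
  ∑' n : Fin d → ℤ,
    poissonKernelEuclidean d t (x + (WithLp.equiv 2 (Fin d → ℝ)).symm (fun i => (n i : ℝ)))

namespace PeriodicPoissonAux

/-- The lattice point `n` regarded as an element of `EuclideanSpace`. -/
noncomputable def vv (d : ℕ) (n : Fin d → ℤ) : EuclideanSpace ℝ (Fin d) :=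
  (WithLp.equiv 2 (Fin d → ℝ)).symm (fun i => (n i : ℝ))

/-- The half-open unit cube translated by the lattice point `n`. -/
def sn (d : ℕ) (n : Fin d → ℤ) : Set (EuclideanSpace ℝ (Fin d)) :=
  {x | ∀ i, x i ∈ Set.Ico (n i : ℝ) ((n i : ℝ) + 1)}

variable {d : ℕ}

lemma ofReal_tsum_le {ι : Type*} {f : ι → ℝ} (hf : ∀ i, 0 ≤ f i) :
    ENNReal.ofReal (∑' i, f i) ≤ ∑' i, ENNReal.ofReal (f i) := by
  by_cases h : Summable f
  · rw [ENNReal.ofReal_tsum_of_nonneg hf h]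
  · rw [tsum_eq_zero_of_not_summable h]; simp

lemma tsum_pi_prod (m : ℕ) (g : ℤ → ℝ≥0∞) :
    ∑' n : Fin m → ℤ, ∏ i, g (n i) = (∑' k : ℤ, g k) ^ m := by
  induction m with
  | zero =>
      rw [tsum_eq_single (fun _ => (0:ℤ)) (fun b hb => absurd (Subsingleton.elim b _) hb)]
      simp
  | succ m ih =>
      rw [← (Fin.consEquiv (fun _ : Fin (m+1) => ℤ)).tsum_eq, pow_succ]
      rw [ENNReal.tsum_prod']
      simp only [Fin.consEquiv_apply, Fin.prod_univ_succ, Fin.cons_zero, Fin.cons_succ]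
      calc ∑' (a : ℤ) (b : Fin m → ℤ), g a * ∏ i, g (b i)
          = ∑' (a : ℤ), g a * ∑' (b : Fin m → ℤ), ∏ i, g (b i) :=
            tsum_congr fun a => ENNReal.tsum_mul_left
        _ = (∑' (a : ℤ), g a) * ∑' (b : Fin m → ℤ), ∏ i, g (b i) := ENNReal.tsum_mul_right
        _ = (∑' k : ℤ, g k) ^ m * ∑' (k : ℤ), g k := by rw [ih, mul_comm]

set_option maxHeartbeats 1000000 in
lemma summable_int_aux {p : ℝ} (hp : 1 < p) :
    Summable fun k : ℤ => (1 + |(k : ℝ)|) ^ (-p) := by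
  have key : Summable fun n : ℕ => (1 + |((n : ℤ) : ℝ)|) ^ (-p) := by
    have h2 : Summable fun n : ℕ => (((n + 1 : ℕ) : ℝ) ^ p)⁻¹ :=
      (summable_nat_add_iff 1).2 (Real.summable_nat_rpow_inv.2 hp)
    apply Summable.of_nonneg_of_le (fun n => Real.rpow_nonneg (by positivity) _) _ h2
    intro n
    have h3 : (1 + |((n : ℤ) : ℝ)|) = ((n + 1 : ℕ) : ℝ) := by
      push_cast [abs_of_nonneg (by positivity : (0:ℝ) ≤ (n:ℝ))]; ring
    rw [h3, Real.rpow_neg (by positivity)]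
  apply Summable.of_nat_of_neg key
  simpa using key

lemma meas_eval (i : Fin d) : Measurable fun x : EuclideanSpace ℝ (Fin d) => x i :=
  (measurable_pi_apply i).comp ((MeasurableEquiv.toLp 2 (Fin d → ℝ)).symm).measurable

lemma sn_meas (n : Fin d → ℤ) : MeasurableSet (sn d n) := by
  have h : sn d n = ⋂ i, (fun x : EuclideanSpace ℝ (Fin d) => x i) ⁻¹'
      (Set.Ico (n i : ℝ) ((n i : ℝ) + 1)) := by
    ext x; simp [sn, Set.mem_iInter]
  rw [h]
  exact MeasurableSet.iInter fun i => (meas_eval i) measurableSet_Ico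

lemma sn_disjoint : Pairwise (Function.onFun Disjoint (sn d)) := by
  intro n m hnm
  rw [Function.onFun, Set.disjoint_left]
  intro x hxn hxm
  apply hnm
  funext i
  have h1 := hxn i
  have h2 := hxm i
  simp only [Set.mem_Ico] at h1 h2
  have a1 : (n i : ℝ) < m i + 1 := lt_of_le_of_lt h1.1 h2.2
  have a2 : (m i : ℝ) < n i + 1 := lt_of_le_of_lt h2.1 h1.2
  have b1 : n i < m i + 1 := by exact_mod_cast a1
  have b2 : m i < n i + 1 := by exact_mod_cast a2
  omega

lemma preim_eq (n : Fin d → ℤ) :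
    (· + vv d n) ⁻¹' (sn d n) = {x : EuclideanSpace ℝ (Fin d) | ∀ i, x i ∈ Set.Ico (0:ℝ) 1} := by
  ext x
  simp only [Set.mem_preimage, sn, Set.mem_setOf_eq, Set.mem_Ico]
  have happ : ∀ i, (x + vv d n) i = x i + n i := fun i => rfl
  constructor
  · intro h i
    have h' := h i
    rw [happ i] at h'
    constructor <;> linarith [h'.1, h'.2]
  · intro h i
    rw [happ i]
    constructor <;> linarith [(h i).1, (h i).2]

lemma tile_le (f : EuclideanSpace ℝ (Fin d) → ℝ≥0∞) :
    (∑' n : Fin d → ℤ, ∫⁻ y in sn d n, f y) ≤ ∫⁻ y, f y := by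
  rw [← lintegral_iUnion (fun n => sn_meas n) sn_disjoint]
  exact setLIntegral_le_lintegral _ _

lemma cube_ae :
    ({x : EuclideanSpace ℝ (Fin d) | ∀ i, x i ∈ Set.Icc (0:ℝ) 1} : Set _)
      =ᵐ[volume] {x : EuclideanSpace ℝ (Fin d) | ∀ i, x i ∈ Set.Ico (0:ℝ) 1} := by
  have hplane : ∀ (i : Fin d) (c : ℝ),
      volume {x : EuclideanSpace ℝ (Fin d) | x i = c} = 0 := by
    intro i c
    have h := (EuclideanSpace.volume_preserving_symm_measurableEquiv_toLp (Fin d)).measure_preimage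
      (s := {f : Fin d → ℝ | f i = c})
      (by
        have h0 : {f : Fin d → ℝ | f i = c} = (fun f : Fin d → ℝ => f i) ⁻¹' {c} := rfl
        have hm : MeasurableSet {f : Fin d → ℝ | f i = c} := by
          rw [h0]; exact measurable_pi_apply i (measurableSet_singleton c)
        exact hm.nullMeasurableSet)
    have he : {x : EuclideanSpace ℝ (Fin d) | x i = c}
        = ((MeasurableEquiv.toLp 2 (Fin d → ℝ)).symm) ⁻¹' {f : Fin d → ℝ | f i = c} := rfl
    rw [he, h]
    have hpl := Measure.pi_hyperplane (fun _ : Fin d => (volume : Measure ℝ)) i c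
    simpa [volume_pi] using hpl
  rw [Filter.eventuallyEq_set, MeasureTheory.ae_iff]
  apply measure_mono_null ?_ (measure_iUnion_null fun i : Fin d => hplane i 1)
  intro x hx
  simp only [Set.mem_setOf_eq, not_iff, Set.mem_iUnion] at hx ⊢
  by_cases hicc : ∀ i, x i ∈ Set.Icc (0:ℝ) 1
  · have hnico : ¬ ∀ i, x i ∈ Set.Ico (0:ℝ) 1 := by tauto
    push_neg at hnico
    obtain ⟨i, hi⟩ := hnico
    have h1 := hicc i
    simp only [Set.mem_Icc] at h1
    simp only [Set.mem_Ico, not_and, not_lt] at hi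
    exact ⟨i, le_antisymm h1.2 (hi h1.1)⟩
  · have hico : ∀ i, x i ∈ Set.Ico (0:ℝ) 1 := by tauto
    exact absurd (fun i => ⟨(hico i).1, (hico i).2.le⟩) hicc

lemma pK_cont {t : ℝ} (ht : 0 < t) :
    Continuous fun x : EuclideanSpace ℝ (Fin d) => poissonKernelEuclidean d t x := by
  apply Continuous.mul continuous_const
  apply Continuous.rpow_const (continuous_const.add (continuous_norm.pow 2))
  intro x; left; exact (add_pos_of_pos_of_nonneg (pow_pos ht 2) (sq_nonneg _)).ne'

lemma c0_pos : 0 < Real.Gamma (((d : ℝ) + 1) / 2) * Real.pi ^ (-(((d : ℝ) + 1) / 2)) := by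
  have h1 : 0 < Real.Gamma (((d : ℝ) + 1) / 2) := Real.Gamma_pos_of_pos (by positivity)
  have h2 : (0:ℝ) < Real.pi ^ (-(((d : ℝ) + 1) / 2)) := Real.rpow_pos_of_pos Real.pi_pos _
  positivity

lemma pK_nonneg {t : ℝ} (ht : 0 < t) (x : EuclideanSpace ℝ (Fin d)) :
    0 ≤ poissonKernelEuclidean d t x := by
  unfold poissonKernelEuclidean
  have h3 : (0:ℝ) < (t ^ 2 + ‖x‖ ^ 2) ^ (-(((d : ℝ) + 1) / 2)) :=
    Real.rpow_pos_of_pos (by positivity) _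
  have hc := @c0_pos d
  positivity

lemma pK_smul {t : ℝ} (ht : 0 < t) (x : EuclideanSpace ℝ (Fin d)) :
    poissonKernelEuclidean d t (t • x) = t ^ (-(d:ℝ)) * poissonKernelEuclidean d 1 x := by
  unfold poissonKernelEuclidean
  have hn : ‖t • x‖ ^ 2 = t ^ 2 * ‖x‖ ^ 2 := by
    rw [norm_smul, Real.norm_eq_abs, mul_pow, sq_abs]
  rw [hn]
  have h1 : t ^ 2 + t ^ 2 * ‖x‖ ^ 2 = t ^ 2 * (1 + ‖x‖ ^ 2) := by ring
  rw [h1, Real.mul_rpow (by positivity) (by positivity)]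
  have h2 : (t ^ 2) ^ (-(((d : ℝ) + 1) / 2)) = t ^ (-((d:ℝ)+1)) := by
    rw [← Real.rpow_natCast t 2, ← Real.rpow_mul ht.le]
    congr 1
    push_cast
    ring
  have h3 : t * t ^ (-((d:ℝ)+1)) = t ^ (-(d:ℝ)) := by
    nth_rewrite 1 [← Real.rpow_one t]
    rw [← Real.rpow_add ht]
    congr 1
    ring
  rw [h2, one_pow, mul_one]
  set c0 := Real.Gamma (((d : ℝ) + 1) / 2) * Real.pi ^ (-(((d : ℝ) + 1) / 2))
  calc c0 * t * (t ^ (-((d:ℝ)+1)) * (1 + ‖x‖ ^ 2) ^ (-(((d : ℝ) + 1) / 2)))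
      = (t * t ^ (-((d:ℝ)+1))) * (c0 * (1 + ‖x‖ ^ 2) ^ (-(((d : ℝ) + 1) / 2))) := by ring
    _ = t ^ (-(d:ℝ)) * (c0 * (1 + ‖x‖ ^ 2) ^ (-(((d : ℝ) + 1) / 2))) := by rw [h3]

lemma lint_K1_finite :
    (∫⁻ x : EuclideanSpace ℝ (Fin d), ENNReal.ofReal (poissonKernelEuclidean d 1 x)) < ∞ := by
  set q := (((d : ℝ) + 1) / 2) with hq
  set c0 := Real.Gamma q * Real.pi ^ (-q) with hc0
  have hc0p : 0 < c0 := c0_pos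
  have hpt : ∀ x : EuclideanSpace ℝ (Fin d),
      ENNReal.ofReal (poissonKernelEuclidean d 1 x)
        ≤ ENNReal.ofReal (c0 * 2 ^ q) * ENNReal.ofReal ((1 + ‖x‖) ^ (-((d:ℝ)+1))) := by
    intro x
    rw [← ENNReal.ofReal_mul (by positivity)]
    apply ENNReal.ofReal_le_ofReal
    unfold poissonKernelEuclidean
    rw [one_pow, mul_one]
    have hs : (0:ℝ) < 1 + ‖x‖ := by positivity
    have key : (1 + ‖x‖ ^ 2) ^ (-q) ≤ 2 ^ q * (1 + ‖x‖) ^ (-((d:ℝ)+1)) := by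
      have h1 : ((1 + ‖x‖) ^ 2) / 2 ≤ 1 + ‖x‖ ^ 2 := by nlinarith [sq_nonneg (1 - ‖x‖)]
      have h2 : (1 + ‖x‖ ^ 2) ^ (-q) ≤ (((1 + ‖x‖) ^ 2) / 2) ^ (-q) :=
        Real.rpow_le_rpow_of_nonpos (by positivity) h1 (by simp only [hq, neg_nonpos]; positivity)
      apply h2.trans
      rw [Real.div_rpow (by positivity) (by norm_num)]
      have h5 : (((1 + ‖x‖) ^ 2 : ℝ)) ^ (-q) = (1 + ‖x‖) ^ (-((d:ℝ)+1)) := by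
        rw [← Real.rpow_natCast (1 + ‖x‖) 2, ← Real.rpow_mul hs.le]
        congr 1
        push_cast
        rw [hq]
        ring
      rw [h5, Real.rpow_neg (by norm_num : (0:ℝ) ≤ 2), div_inv_eq_mul, mul_comm]
    calc c0 * (1 + ‖x‖ ^ 2) ^ (-q) ≤ c0 * (2 ^ q * (1 + ‖x‖) ^ (-((d:ℝ)+1))) :=
          mul_le_mul_of_nonneg_left key hc0p.le
      _ = c0 * 2 ^ q * (1 + ‖x‖) ^ (-((d:ℝ)+1)) := by ring
  calc (∫⁻ x : EuclideanSpace ℝ (Fin d), ENNReal.ofReal (poissonKernelEuclidean d 1 x))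
      ≤ ∫⁻ x : EuclideanSpace ℝ (Fin d),
          ENNReal.ofReal (c0 * 2 ^ q) * ENNReal.ofReal ((1 + ‖x‖) ^ (-((d:ℝ)+1))) :=
        lintegral_mono hpt
    _ = ENNReal.ofReal (c0 * 2 ^ q) *
          ∫⁻ x : EuclideanSpace ℝ (Fin d), ENNReal.ofReal ((1 + ‖x‖) ^ (-((d:ℝ)+1))) :=
        lintegral_const_mul' _ _ ENNReal.ofReal_ne_top
    _ < ∞ := by
        apply ENNReal.mul_lt_top ENNReal.ofReal_lt_top
        apply finite_integral_one_add_norm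
        rw [finrank_euclideanSpace_fin]
        linarith

lemma lint_Kt_eq {t : ℝ} (ht : 0 < t) :
    (∫⁻ x : EuclideanSpace ℝ (Fin d), ENNReal.ofReal (poissonKernelEuclidean d t x))
      = ∫⁻ x : EuclideanSpace ℝ (Fin d), ENNReal.ofReal (poissonKernelEuclidean d 1 x) := by
  have hmeas : Measurable fun x : EuclideanSpace ℝ (Fin d) =>
      ENNReal.ofReal (poissonKernelEuclidean d t x) := (pK_cont ht).measurable.ennreal_ofReal
  have hmap := Measure.map_addHaar_smul (volume : Measure (EuclideanSpace ℝ (Fin d))) ht.ne'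
  have key : (∫⁻ x : EuclideanSpace ℝ (Fin d), ENNReal.ofReal (poissonKernelEuclidean d t (t • x)))
      = ENNReal.ofReal ((t ^ d)⁻¹) * ∫⁻ x, ENNReal.ofReal (poissonKernelEuclidean d t x) := by
    rw [← lintegral_map hmeas (measurable_const_smul t), hmap, lintegral_smul_measure]
    congr 2
    rw [finrank_euclideanSpace_fin, abs_of_nonneg (by positivity)]
  have key2 : (∫⁻ x : EuclideanSpace ℝ (Fin d), ENNReal.ofReal (poissonKernelEuclidean d t (t • x)))
      = ENNReal.ofReal ((t ^ d)⁻¹) * ∫⁻ x, ENNReal.ofReal (poissonKernelEuclidean d 1 x) := by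
    have hpt : ∀ x : EuclideanSpace ℝ (Fin d), ENNReal.ofReal (poissonKernelEuclidean d t (t • x))
        = ENNReal.ofReal ((t ^ d)⁻¹) * ENNReal.ofReal (poissonKernelEuclidean d 1 x) := by
      intro x
      rw [pK_smul ht, ENNReal.ofReal_mul (by positivity)]
      congr 2
      rw [Real.rpow_neg ht.le, Real.rpow_natCast]
    simp_rw [hpt]
    exact lintegral_const_mul' _ _ ENNReal.ofReal_ne_top
  have hne : ENNReal.ofReal ((t ^ d)⁻¹) ≠ 0 := by
    simp only [ne_eq, ENNReal.ofReal_eq_zero, not_le]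
    positivity
  exact (ENNReal.mul_right_inj hne ENNReal.ofReal_ne_top).mp (key.symm.trans key2)

lemma abs_apply_le_norm (x : EuclideanSpace ℝ (Fin d)) (i : Fin d) : |x i| ≤ ‖x‖ := by
  rw [EuclideanSpace.norm_eq, ← Real.sqrt_sq_eq_abs]
  apply Real.sqrt_le_sqrt
  have h := Finset.single_le_sum (f := fun j => ‖x j‖ ^ 2) (fun j _ => by positivity)
    (Finset.mem_univ i)
  simpa [Real.norm_eq_abs, sq_abs] using h

lemma norm_le_sqrt_cube {x : EuclideanSpace ℝ (Fin d)} (hx : ∀ i, x i ∈ Set.Icc (0:ℝ) 1) :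
    ‖x‖ ≤ Real.sqrt d := by
  rw [EuclideanSpace.norm_eq]
  apply Real.sqrt_le_sqrt
  calc ∑ i, ‖x i‖ ^ 2 ≤ ∑ _i : Fin d, 1 := by
        apply Finset.sum_le_sum
        intro i _
        have h := hx i
        rw [Real.norm_eq_abs, sq_abs]
        nlinarith [h.1, h.2]
    _ = d := by simp

lemma term_bound (hd : 1 ≤ d) {t : ℝ} (ht : 0 < t) (ht1 : t ≤ 1)
    {x : EuclideanSpace ℝ (Fin d)} (hx : ∀ i, x i ∈ Set.Icc (0:ℝ) 1) (n : Fin d → ℤ) :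
    poissonKernelEuclidean d t (x + vv d n)
      ≤ (Real.Gamma (((d : ℝ) + 1) / 2) * Real.pi ^ (-(((d : ℝ) + 1) / 2)))
        * (2 * (1 + Real.sqrt d) ^ 2) ^ (((d : ℝ) + 1) / 2) * t ^ (-(d:ℝ))
        * ∏ i, (1 + |(n i : ℝ)|) ^ (-(((d:ℝ) + 1) / d)) := by
  set q : ℝ := ((d : ℝ) + 1) / 2 with hq
  set c0 : ℝ := Real.Gamma q * Real.pi ^ (-q) with hc0
  have hc0p : 0 < c0 := c0_pos
  set y := x + vv d n with hy
  set s : ℝ := ‖y‖ with hs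
  have hs0 : 0 ≤ s := norm_nonneg _
  have hdpos : (0:ℝ) < d := by exact_mod_cast hd
  have step1 : poissonKernelEuclidean d t y ≤ c0 * t ^ (-(d:ℝ)) * (1 + s ^ 2) ^ (-q) := by
    unfold poissonKernelEuclidean
    have hineq : t ^ 2 * (1 + s ^ 2) ≤ t ^ 2 + s ^ 2 := by
      have ht2 : t ^ 2 ≤ 1 := by nlinarith
      nlinarith [mul_le_mul_of_nonneg_right ht2 (sq_nonneg s)]
    have h2 : (t ^ 2 + s ^ 2) ^ (-q) ≤ (t ^ 2 * (1 + s ^ 2)) ^ (-q) :=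
      Real.rpow_le_rpow_of_nonpos (by positivity) hineq (by simp only [hq, neg_nonpos]; positivity)
    have h3 : (t ^ 2 * (1 + s ^ 2)) ^ (-q) = t ^ (-((d:ℝ)+1)) * (1 + s ^ 2) ^ (-q) := by
      rw [Real.mul_rpow (by positivity) (by positivity)]
      congr 1
      rw [← Real.rpow_natCast t 2, ← Real.rpow_mul ht.le]
      congr 1
      push_cast
      rw [hq]; ring
    calc c0 * t * (t ^ 2 + s ^ 2) ^ (-q) ≤ c0 * t * (t ^ 2 * (1 + s ^ 2)) ^ (-q) :=
          mul_le_mul_of_nonneg_left h2 (by positivity)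
      _ = c0 * (t * t ^ (-((d:ℝ)+1))) * (1 + s ^ 2) ^ (-q) := by rw [h3]; ring
      _ = c0 * t ^ (-(d:ℝ)) * (1 + s ^ 2) ^ (-q) := by
          congr 2
          nth_rewrite 1 [← Real.rpow_one t]
          rw [← Real.rpow_add ht]
          congr 1
          ring
  have hvn : ‖vv d n‖ ≤ s + Real.sqrt d := by
    have hsub : vv d n = y - x := by rw [hy]; abel
    rw [hsub]
    calc ‖y - x‖ ≤ ‖y‖ + ‖x‖ := norm_sub_le _ _
      _ ≤ s + Real.sqrt d := add_le_add le_rfl (norm_le_sqrt_cube hx)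
  have hsd : (0:ℝ) ≤ Real.sqrt d := Real.sqrt_nonneg _
  have step2 : (1 + s ^ 2) ^ (-q)
      ≤ (2 * (1 + Real.sqrt d) ^ 2) ^ q * (1 + ‖vv d n‖) ^ (-((d:ℝ)+1)) := by
    have hb : (0:ℝ) < 1 + ‖vv d n‖ := by positivity
    have key : (1 + ‖vv d n‖) ^ 2 / (2 * (1 + Real.sqrt d) ^ 2) ≤ 1 + s ^ 2 := by
      rw [div_le_iff₀ (by positivity)]
      have h1 : 1 + ‖vv d n‖ ≤ (1 + Real.sqrt d) * (1 + s) := by nlinarith [norm_nonneg (vv d n)]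
      have h2 : (1 + ‖vv d n‖) ^ 2 ≤ (1 + Real.sqrt d) ^ 2 * (1 + s) ^ 2 := by
        rw [← mul_pow]; exact pow_le_pow_left₀ hb.le h1 2
      nlinarith [sq_nonneg (1 - s)]
    have h2 : (1 + s ^ 2) ^ (-q)
        ≤ ((1 + ‖vv d n‖) ^ 2 / (2 * (1 + Real.sqrt d) ^ 2)) ^ (-q) :=
      Real.rpow_le_rpow_of_nonpos (by positivity) key (by simp only [hq, neg_nonpos]; positivity)
    apply h2.trans
    rw [Real.div_rpow (by positivity) (by positivity)]
    have h5 : (((1 + ‖vv d n‖) ^ 2 : ℝ)) ^ (-q) = (1 + ‖vv d n‖) ^ (-((d:ℝ)+1)) := by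
      rw [← Real.rpow_natCast (1 + ‖vv d n‖) 2, ← Real.rpow_mul hb.le]
      congr 1
      push_cast
      rw [hq]; ring
    rw [h5, Real.rpow_neg (show (0:ℝ) ≤ 2 * (1 + Real.sqrt d) ^ 2 by positivity) q,
      div_inv_eq_mul, mul_comm]
  have step3 : (1 + ‖vv d n‖) ^ (-((d:ℝ)+1))
      ≤ ∏ i, (1 + |(n i : ℝ)|) ^ (-(((d:ℝ) + 1) / d)) := by
    have hb : (0:ℝ) < 1 + ‖vv d n‖ := by positivity
    have hfac : ∀ i, (1:ℝ) + |(n i : ℝ)| ≤ 1 + ‖vv d n‖ := by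
      intro i
      have happ : |(n i : ℝ)| = |(vv d n) i| := rfl
      rw [happ]
      linarith [abs_apply_le_norm (vv d n) i]
    have hprod : (∏ i, (1 + |(n i : ℝ)|)) ≤ (1 + ‖vv d n‖) ^ (d:ℕ) := by
      calc (∏ i, (1 + |(n i : ℝ)|)) ≤ ∏ _i : Fin d, (1 + ‖vv d n‖) :=
            Finset.prod_le_prod (fun i _ => by positivity) (fun i _ => hfac i)
        _ = (1 + ‖vv d n‖) ^ (d:ℕ) := by rw [Finset.prod_const]; simp
    have hprodpos : (0:ℝ) < ∏ i, (1 + |(n i : ℝ)|) :=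
      Finset.prod_pos fun i _ => by positivity
    have h6 : (1 + ‖vv d n‖) ^ (-((d:ℝ)+1)) = ((1 + ‖vv d n‖) ^ (d:ℕ)) ^ (-(((d:ℝ)+1)/d)) := by
      rw [← Real.rpow_natCast (1 + ‖vv d n‖) d, ← Real.rpow_mul hb.le]
      congr 1
      field_simp
    rw [h6]
    have h7 : ((1 + ‖vv d n‖) ^ (d:ℕ)) ^ (-(((d:ℝ)+1)/d))
        ≤ (∏ i, (1 + |(n i : ℝ)|)) ^ (-(((d:ℝ)+1)/d)) :=
      Real.rpow_le_rpow_of_nonpos hprodpos hprod (by simp only [neg_nonpos]; positivity)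
    apply h7.trans
    rw [← Real.finset_prod_rpow _ _ (fun i _ => by positivity)]
  calc poissonKernelEuclidean d t y ≤ c0 * t ^ (-(d:ℝ)) * (1 + s ^ 2) ^ (-q) := step1
    _ ≤ c0 * t ^ (-(d:ℝ)) * ((2 * (1 + Real.sqrt d) ^ 2) ^ q * (1 + ‖vv d n‖) ^ (-((d:ℝ)+1))) :=
        mul_le_mul_of_nonneg_left step2 (by positivity)
    _ ≤ c0 * t ^ (-(d:ℝ)) * ((2 * (1 + Real.sqrt d) ^ 2) ^ q
          * ∏ i, (1 + |(n i : ℝ)|) ^ (-(((d:ℝ) + 1) / d))) := by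
        apply mul_le_mul_of_nonneg_left _ (by positivity)
        apply mul_le_mul_of_nonneg_left step3 (by positivity)
    _ = c0 * (2 * (1 + Real.sqrt d) ^ 2) ^ q * t ^ (-(d:ℝ))
          * ∏ i, (1 + |(n i : ℝ)|) ^ (-(((d:ℝ) + 1) / d)) := by ring

end PeriodicPoissonAux

open PeriodicPoissonAux

/-- `L^r` bound for the periodized Poisson kernel:
`‖R_t‖_{L^r([0,1]^d)} ≤ C t^{-d(1 - 1/r)}` for `0 < t ≤ 1`. -/
theorem periodicPoissonKernel_Lr_bound (d : ℕ) (hd : 1 ≤ d) (r : ℝ) (hr : 1 ≤ r) :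
    ∃ C : ℝ, 0 < C ∧ ∀ t : ℝ, 0 < t → t ≤ 1 →
      (∫⁻ x in {x : EuclideanSpace ℝ (Fin d) | ∀ i, x i ∈ Set.Icc (0 : ℝ) 1},
          ENNReal.ofReal (periodicPoissonKernel d t x) ^ r) ^ (1 / r)
        ≤ ENNReal.ofReal (C * t ^ (-(d : ℝ) * (1 - 1 / r))) := by
  classical
  set q : ℝ := ((d : ℝ) + 1) / 2 with hq
  set c0 : ℝ := Real.Gamma q * Real.pi ^ (-q) with hc0
  have hc0p : (0:ℝ) < c0 := c0_pos
  set κ : ℝ := (2 * (1 + Real.sqrt d) ^ 2) ^ q with hκ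
  have hκp : 0 < κ := Real.rpow_pos_of_pos (by positivity) _
  set p : ℝ := ((d:ℝ) + 1) / d with hp
  have hdpos : (0:ℝ) < d := by exact_mod_cast hd
  have hp1 : 1 < p := by rw [hp, lt_div_iff₀ hdpos]; linarith
  have hsum := summable_int_aux hp1
  set σ₀ : ℝ := ∑' k : ℤ, (1 + |(k:ℝ)|) ^ (-p) with hσ₀
  have hσ₀0 : 0 ≤ σ₀ := tsum_nonneg fun k => Real.rpow_nonneg (by positivity) _
  have hσ : (∑' k : ℤ, ENNReal.ofReal ((1 + |(k:ℝ)|) ^ (-p))) = ENNReal.ofReal σ₀ :=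
    (ENNReal.ofReal_tsum_of_nonneg (fun k => Real.rpow_nonneg (by positivity) _) hsum).symm
  set A : ℝ := c0 * κ * σ₀ ^ d with hA
  set A' : ℝ := max A 1 with hA'
  have hA'1 : (1:ℝ) ≤ A' := le_max_right _ _
  have hA'0 : (0:ℝ) < A' := lt_of_lt_of_le one_pos hA'1
  set B : ℝ≥0∞ := ∫⁻ x : EuclideanSpace ℝ (Fin d), ENNReal.ofReal (poissonKernelEuclidean d 1 x) with hB
  have hBfin : B < ∞ := lint_K1_finite
  set b : ℝ≥0∞ := max B 1 with hb
  have hbfin : b ≠ ∞ := (max_lt hBfin ENNReal.one_lt_top).ne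
  set b₀ : ℝ := b.toReal with hb₀
  have hb1 : (1:ℝ≥0∞) ≤ b := le_max_right _ _
  have hb₀1 : (1:ℝ) ≤ b₀ := by
    have := ENNReal.toReal_mono hbfin hb1
    simpa using this
  have hb₀eq : ENNReal.ofReal b₀ = b := ENNReal.ofReal_toReal hbfin
  refine ⟨A' * b₀, by positivity, ?_⟩
  intro t ht ht1
  have hr0 : (0:ℝ) < r := lt_of_lt_of_le one_pos hr
  have htd : (0:ℝ) < t ^ (-(d:ℝ)) := Real.rpow_pos_of_pos ht _
  set Icc : Set (EuclideanSpace ℝ (Fin d)) := {x | ∀ i, x i ∈ Set.Icc (0:ℝ) 1} with hIccDef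
  have hIccMeas : MeasurableSet Icc := by
    have hset : Icc = ⋂ i, (fun x : EuclideanSpace ℝ (Fin d) => x i) ⁻¹' Set.Icc (0:ℝ) 1 := by
      ext x; simp [hIccDef, Set.mem_iInter]
    rw [hset]; exact MeasurableSet.iInter fun i => (meas_eval i) measurableSet_Icc
  set F : EuclideanSpace ℝ (Fin d) → ℝ≥0∞ :=
    fun x => ∑' n : Fin d → ℤ, ENNReal.ofReal (poissonKernelEuclidean d t (x + vv d n)) with hF
  set M : ℝ≥0∞ := ENNReal.ofReal (A' * t ^ (-(d:ℝ))) with hM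
  have hMne : M ≠ ∞ := ENNReal.ofReal_ne_top
  have hRF : ∀ x, ENNReal.ofReal (periodicPoissonKernel d t x) ≤ F x := fun x =>
    ofReal_tsum_le (fun n => pK_nonneg ht _)
  have hFM : ∀ x ∈ Icc, F x ≤ M := by
    intro x hx
    have hterm : ∀ n : Fin d → ℤ, ENNReal.ofReal (poissonKernelEuclidean d t (x + vv d n))
        ≤ ENNReal.ofReal (c0 * κ * t ^ (-(d:ℝ))) *
          ∏ i, ENNReal.ofReal ((1 + |(n i : ℝ)|) ^ (-p)) := by
      intro n
      rw [← ENNReal.ofReal_prod_of_nonneg (fun i _ => Real.rpow_nonneg (by positivity) _),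
        ← ENNReal.ofReal_mul (by positivity)]
      exact ENNReal.ofReal_le_ofReal (term_bound hd ht ht1 hx n)
    calc F x ≤ ∑' n : Fin d → ℤ, (ENNReal.ofReal (c0 * κ * t ^ (-(d:ℝ))) *
            ∏ i, ENNReal.ofReal ((1 + |(n i : ℝ)|) ^ (-p))) := ENNReal.tsum_le_tsum hterm
      _ = ENNReal.ofReal (c0 * κ * t ^ (-(d:ℝ))) *
            ∑' n : Fin d → ℤ, ∏ i, ENNReal.ofReal ((1 + |(n i : ℝ)|) ^ (-p)) :=
          ENNReal.tsum_mul_left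
      _ = ENNReal.ofReal (c0 * κ * t ^ (-(d:ℝ))) * (ENNReal.ofReal σ₀) ^ d := by
          rw [tsum_pi_prod d (fun k => ENNReal.ofReal ((1 + |(k : ℝ)|) ^ (-p))), hσ]
      _ = ENNReal.ofReal (A * t ^ (-(d:ℝ))) := by
          rw [← ENNReal.ofReal_pow hσ₀0, ← ENNReal.ofReal_mul (by positivity)]
          congr 1
          rw [hA]; ring
      _ ≤ M := ENNReal.ofReal_le_ofReal
          (mul_le_mul_of_nonneg_right (le_max_left _ _) htd.le)
  have holder : ∀ x ∈ Icc, ENNReal.ofReal (periodicPoissonKernel d t x) ^ r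
      ≤ M ^ (r - 1) * F x := by
    intro x hx
    have h1 : ENNReal.ofReal (periodicPoissonKernel d t x) ^ r
        = ENNReal.ofReal (periodicPoissonKernel d t x) ^ (r - 1)
          * ENNReal.ofReal (periodicPoissonKernel d t x) ^ (1:ℝ) := by
      rw [← ENNReal.rpow_add_of_nonneg _ _ (by linarith) zero_le_one]
      norm_num
    rw [h1, ENNReal.rpow_one]
    exact mul_le_mul' (ENNReal.rpow_le_rpow ((hRF x).trans (hFM x hx)) (by linarith)) (hRF x)
  have hIco : (∫⁻ x in {x : EuclideanSpace ℝ (Fin d) | ∀ i, x i ∈ Set.Ico (0:ℝ) 1}, F x) ≤ B := by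
    have hmeas : ∀ n : Fin d → ℤ, AEMeasurable (fun x : EuclideanSpace ℝ (Fin d) =>
        ENNReal.ofReal (poissonKernelEuclidean d t (x + vv d n)))
        (volume.restrict {x : EuclideanSpace ℝ (Fin d) | ∀ i, x i ∈ Set.Ico (0:ℝ) 1}) := by
      intro n
      have hm : Measurable fun x : EuclideanSpace ℝ (Fin d) => poissonKernelEuclidean d t (x + vv d n) :=
        (pK_cont ht).measurable.comp (measurable_id.add_const (vv d n))
      exact hm.ennreal_ofReal.aemeasurable
    rw [hF]
    rw [lintegral_tsum hmeas]
    have heach : ∀ n : Fin d → ℤ,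
        (∫⁻ x in {x : EuclideanSpace ℝ (Fin d) | ∀ i, x i ∈ Set.Ico (0:ℝ) 1},
          ENNReal.ofReal (poissonKernelEuclidean d t (x + vv d n)))
        = ∫⁻ y in sn d n, ENNReal.ofReal (poissonKernelEuclidean d t y) := by
      intro n
      rw [← preim_eq n]
      exact (measurePreserving_add_right volume (vv d n)).setLIntegral_comp_preimage_emb
        (measurableEmbedding_addRight (vv d n))
        (fun y => ENNReal.ofReal (poissonKernelEuclidean d t y)) (sn d n)
    rw [tsum_congr heach]
    exact (tile_le _).trans (le_of_eq (lint_Kt_eq ht))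
  have hInt : (∫⁻ x in Icc, ENNReal.ofReal (periodicPoissonKernel d t x) ^ r)
      ≤ M ^ (r - 1) * b := by
    calc ∫⁻ x in Icc, ENNReal.ofReal (periodicPoissonKernel d t x) ^ r
        ≤ ∫⁻ x in Icc, M ^ (r - 1) * F x := setLIntegral_mono' hIccMeas holder
      _ = M ^ (r - 1) * ∫⁻ x in Icc, F x :=
          lintegral_const_mul' _ _ (ENNReal.rpow_ne_top_of_nonneg (by linarith) hMne)
      _ = M ^ (r - 1) * ∫⁻ x in {x : EuclideanSpace ℝ (Fin d) | ∀ i, x i ∈ Set.Ico (0:ℝ) 1}, F x := by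
          rw [setLIntegral_congr cube_ae]
      _ ≤ M ^ (r - 1) * B := mul_le_mul' le_rfl hIco
      _ ≤ M ^ (r - 1) * b := mul_le_mul' le_rfl (le_max_left _ _)
  have h1r : (0:ℝ) ≤ 1 / r := by positivity
  have h1r1 : 1 / r ≤ 1 := by rw [div_le_one hr0]; exact hr
  have hs_eq : (r - 1) * (1 / r) = 1 - 1 / r := by field_simp
  have hs01 : 0 ≤ (r - 1) * (1 / r) := by
    apply mul_nonneg (by linarith) h1r
  have hs_le1 : (r - 1) * (1 / r) ≤ 1 := by rw [hs_eq]; linarith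
  have hMpow : M ^ ((r - 1) * (1 / r)) ≤ ENNReal.ofReal (A' * t ^ (-(d:ℝ) * (1 - 1 / r))) := by
    rw [hM, ENNReal.ofReal_rpow_of_pos (by positivity)]
    apply ENNReal.ofReal_le_ofReal
    rw [Real.mul_rpow hA'0.le htd.le, ← Real.rpow_mul ht.le]
    have hexp : -(d:ℝ) * ((r - 1) * (1 / r)) = -(d:ℝ) * (1 - 1 / r) := by rw [hs_eq]
    rw [hexp]
    apply mul_le_mul_of_nonneg_right _ (Real.rpow_nonneg ht.le _)
    calc A' ^ ((r - 1) * (1 / r)) ≤ A' ^ (1:ℝ) :=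
          Real.rpow_le_rpow_of_exponent_le hA'1 hs_le1
      _ = A' := Real.rpow_one A'
  calc (∫⁻ x in Icc, ENNReal.ofReal (periodicPoissonKernel d t x) ^ r) ^ (1 / r)
      ≤ (M ^ (r - 1) * b) ^ (1 / r) := ENNReal.rpow_le_rpow hInt h1r
    _ = (M ^ (r - 1)) ^ (1 / r) * b ^ (1 / r) := ENNReal.mul_rpow_of_nonneg _ _ h1r
    _ ≤ (M ^ (r - 1)) ^ (1 / r) * b := by
        apply mul_le_mul' le_rfl
        calc b ^ (1 / r) ≤ b ^ (1:ℝ) := ENNReal.rpow_le_rpow_of_exponent_le hb1 h1r1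
          _ = b := ENNReal.rpow_one b
    _ = M ^ ((r - 1) * (1 / r)) * b := by rw [ENNReal.rpow_mul]
    _ ≤ ENNReal.ofReal (A' * t ^ (-(d:ℝ) * (1 - 1 / r))) * b := mul_le_mul' hMpow le_rfl
    _ = ENNReal.ofReal (A' * b₀ * t ^ (-(d:ℝ) * (1 - 1 / r))) := by
        rw [← hb₀eq, ← ENNReal.ofReal_mul (by positivity)]
        congr 1
        ring
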